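/- Assume gcd(3k, q) = 1 and q−1 ∉ {k, 2k, 3k}, and let β = (α_1,…,α_k, γ·α_1,…,γ·α_k, γ²·α_1,…,γ²·α_k) ∈ F_q^{3k} (so n = 3k; its entries are pairwise distinct). If 2ℓ < k, or if k = 2ℓ and (k : F_q)·(1 + γ^k + γ^{2k}) + Σ_{i=1}^{ℓ} a_{1i}² ≠ 0 in F_q, then the GRL code GRL_k(β, A) is Euclidean LCD. -/
import Mathlib


open Matrix BigOperators Finset

/-- Euclidean dual of a code `C ⊆ F^ι`. -/
def dualE {F : Type} [Field F] {ι : Type} [Fintype ι] (C : Submodule F (ι → F)) :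
    Submodule F (ι → F) where
  carrier := {x | ∀ y ∈ C, ∑ i, x i * y i = 0}
  add_mem' := by
    intro a b ha hb y hy
    have h : ∑ i, (a + b) i * y i = (∑ i, a i * y i) + ∑ i, b i * y i := by
      rw [← Finset.sum_add_distrib]
      exact Finset.sum_congr rfl fun i _ => add_mul _ _ _
    rw [h, ha y hy, hb y hy, add_zero]
  zero_mem' := by intro y hy; simp
  smul_mem' := by
    intro c a ha y hy
    have h : ∑ i, (c • a) i * y i = c * ∑ i, a i * y i := by
      rw [Finset.mul_sum]
      exact Finset.sum_congr rfl fun i _ => by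
        simp [Pi.smul_apply, smul_eq_mul, mul_assoc]
    rw [h, ha y hy, mul_zero]

/-- Generator matrix of the generalized Roth–Lempel code: evaluation columns indexed by `ι`
(entry `β j ^ r`), extra columns indexed by `Fin ℓ` (zero for rows `r < k - ℓ`, and the
corresponding row of `A` for rows `k - ℓ ≤ r ≤ k - 1`). -/
def GRLmatrix {F : Type} [Field F] (k ℓ : ℕ) (hℓk : ℓ ≤ k) {ι : Type} (β : ι → F)
    (A : Matrix (Fin ℓ) (Fin ℓ) F) : Matrix (Fin k) (ι ⊕ Fin ℓ) F :=
  fun r => Sum.elim (fun j => β j ^ (r : ℕ))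
    (fun j' => if _h : (r : ℕ) < k - ℓ then 0
      else A ⟨(r : ℕ) - (k - ℓ), by have := r.isLt; omega⟩ j')

/-- The generalized Roth–Lempel code: the row span of `GRLmatrix`. -/
def GRLcode {F : Type} [Field F] (k ℓ : ℕ) (hℓk : ℓ ≤ k) {ι : Type} (β : ι → F)
    (A : Matrix (Fin ℓ) (Fin ℓ) F) : Submodule F ((ι ⊕ Fin ℓ) → F) :=
  Submodule.span F (Set.range (GRLmatrix k ℓ hℓk β A))

set_option maxHeartbeats 2000000 in
/-- with `gcd(3k, q) = 1`, `q - 1 ∉ {k, 2k, 3k}` and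
`β = (α_1,…,α_k, γ·α_1,…,γ·α_k, γ²·α_1,…,γ²·α_k)`, if `2ℓ < k`, or `k = 2ℓ` and
`k·(1 + γ^k + γ^{2k}) + Σ a_{1i}² ≠ 0`, then the GRL code is Euclidean LCD. -/
theorem stmt7 {F : Type} [Field F] [Fintype F]
    (p m : ℕ) (hp : p.Prime) (hodd : Odd p) (hm : 0 < m)
    (hcard : Fintype.card F = p ^ m)
    (γ : Fˣ) (hγ : ∀ x : Fˣ, x ∈ Subgroup.zpowers γ)
    (k ℓ : ℕ) (hℓ2 : 2 ≤ ℓ) (hℓk : ℓ ≤ k) (hkdvd : k ∣ Fintype.card F - 1)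
    (A : Matrix (Fin ℓ) (Fin ℓ) F) (hA : IsUnit A.det)
    (α : Fin k → F)
    (hα : ∀ i : Fin k, α i = (γ : F) ^ ((Fintype.card F - 1) / k * ((i : ℕ) + 1)))
    (hgcd : Nat.gcd (3 * k) (Fintype.card F) = 1)
    (hne1 : Fintype.card F - 1 ≠ k) (hne2 : Fintype.card F - 1 ≠ 2 * k)
    (hne3 : Fintype.card F - 1 ≠ 3 * k)
    (β : (Fin 3 × Fin k) → F)
    (hβ : ∀ j : Fin 3 × Fin k, β j = (γ : F) ^ (j.1 : ℕ) * α j.2)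
    (hcase : 2 * ℓ < k ∨
      (k = 2 * ℓ ∧ (k : F) * (1 + (γ : F) ^ k + (γ : F) ^ (2 * k)) +
        ∑ i : Fin ℓ, A ⟨0, by omega⟩ i ^ 2 ≠ 0)) :
    GRLcode k ℓ hℓk β A ⊓ dualE (GRLcode k ℓ hℓk β A) = ⊥ := by
  classical
  have hk0 : 0 < k := by omega
  have hlk' : ℓ < k := by rcases hcase with h | ⟨h, _⟩ <;> omega
  have h2l : 2 * ℓ ≤ k := by rcases hcase with h | ⟨h, _⟩ <;> omega
  have hq1 : 1 < Fintype.card F := Fintype.one_lt_card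
  obtain ⟨d, hd⟩ := hkdvd
  have hd0 : 0 < d := by
    rcases Nat.eq_zero_or_pos d with h | h
    · subst h; omega
    · exact h
  -- characteristic facts
  have hchar_prime : (ringChar F).Prime := CharP.char_is_prime F (ringChar F)
  have hpq : p ∣ Fintype.card F := by
    rw [hcard]; exact dvd_pow_self p (by omega)
  have hcharp : ringChar F = p := by
    have h1 : (ringChar F) ∣ Fintype.card F := by
      have h2 := FiniteField.cast_card_eq_zero F
      exact (CharP.cast_eq_zero_iff F (ringChar F) _).mp h2
    rw [hcard] at h1
    exact (Nat.prime_dvd_prime_iff_eq hchar_prime hp).mp (hchar_prime.dvd_of_dvd_pow h1)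
  have hp3k : ¬ (p ∣ 3 * k) := by
    intro hdvd
    have h1 : p ∣ Nat.gcd (3 * k) (Fintype.card F) := Nat.dvd_gcd hdvd hpq
    rw [hgcd] at h1
    have h2 := Nat.le_of_dvd one_pos h1
    have h3 := hp.two_le
    omega
  have hkF : (k : F) ≠ 0 := by
    intro h
    have h1 := (CharP.cast_eq_zero_iff F (ringChar F) k).mp h
    rw [hcharp] at h1
    exact hp3k (h1.mul_left 3)
  have h3F : (3 : F) ≠ 0 := by
    intro h
    have h1 := (CharP.cast_eq_zero_iff F (ringChar F) 3).mp (by exact_mod_cast h)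
    rw [hcharp] at h1
    exact hp3k (h1.mul_right k)
  -- order of γ
  have horder : orderOf γ = Fintype.card F - 1 := by
    rw [orderOf_eq_card_of_forall_mem_zpowers hγ, Nat.card_units, Nat.card_eq_fintype_card]
  have hγpow : ∀ e : ℕ, ((γ : F) ^ e = 1 ↔ (Fintype.card F - 1) ∣ e) := by
    intro e
    rw [← Units.val_pow_eq_pow_val, Units.val_eq_one, ← horder,
      orderOf_dvd_iff_pow_eq_one]
  have hγq1 : (γ : F) ^ (Fintype.card F - 1) = 1 := (hγpow _).mpr dvd_rfl
  have hone : (1 : F) + (γ : F) ^ k + (γ : F) ^ (2 * k) ≠ 0 := by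
    intro h0
    have h2k : (γ : F) ^ (2 * k) = ((γ : F) ^ k) ^ 2 := by rw [← pow_mul, mul_comm]
    have h3k : (γ : F) ^ (3 * k) = ((γ : F) ^ k) ^ 3 := by rw [← pow_mul, mul_comm]
    have hcube : (γ : F) ^ (3 * k) = 1 := by
      have hfac : (γ : F) ^ (3 * k) - 1
          = ((γ : F) ^ k - 1) * (1 + (γ : F) ^ k + (γ : F) ^ (2 * k)) := by
        rw [h2k, h3k]; ring
      rw [h0, mul_zero] at hfac
      exact sub_eq_zero.mp hfac
    have hdvd : (Fintype.card F - 1) ∣ 3 * k := (hγpow _).mp hcube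
    rw [hd] at hdvd
    have hd3 : d ∣ 3 := by
      have h' : d * k ∣ 3 * k := by rwa [mul_comm k d] at hdvd
      exact (Nat.mul_dvd_mul_iff_right hk0).mp h'
    have hdle := Nat.le_of_dvd (by norm_num) hd3
    interval_cases d
    · exact hne1 (by omega)
    · omega
    · exact hne3 (by omega)
  have hcne : (k : F) * (1 + (γ : F) ^ k + (γ : F) ^ (2 * k)) ≠ 0 := mul_ne_zero hkF hone
  have h3kF : (3 : F) * (k : F) ≠ 0 := mul_ne_zero h3F hkF
  have hdk : (Fintype.card F - 1) / k = d := by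
    rw [hd, Nat.mul_div_cancel_left d hk0]
  -- roots of unity sum
  have L1 : ∀ e : ℕ, ∑ i : Fin k, α i ^ e = if k ∣ e then (k : F) else 0 := by
    intro e
    have hterm : ∀ i : Fin k, α i ^ e = ((γ : F) ^ (d * e)) ^ ((i : ℕ) + 1) := by
      intro i
      rw [hα i, hdk, ← pow_mul, ← pow_mul]
      congr 1
      ring
    rw [Finset.sum_congr rfl (fun i _ => hterm i)]
    by_cases hke : k ∣ e
    · obtain ⟨t, rfl⟩ := hke
      have hx1 : (γ : F) ^ (d * (k * t)) = 1 := by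
        rw [show d * (k * t) = (Fintype.card F - 1) * t by rw [hd]; ring, pow_mul, hγq1,
          one_pow]
      rw [if_pos ⟨t, rfl⟩, hx1]
      simp
    · rw [if_neg hke]
      set x := (γ : F) ^ (d * e) with hxdef
      have hxk : x ^ k = 1 := by
        rw [← pow_mul, show d * e * k = (Fintype.card F - 1) * e by rw [hd]; ring, pow_mul,
          hγq1, one_pow]
      have hx1 : x ≠ 1 := by
        intro h
        have hdvd : (Fintype.card F - 1) ∣ d * e := (hγpow _).mp h
        rw [hd] at hdvd
        have h' : d * k ∣ d * e := by rwa [mul_comm k d] at hdvd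
        exact hke ((Nat.mul_dvd_mul_iff_left hd0).mp h')
      have hsum : ∑ i ∈ Finset.range k, x ^ i = 0 := by
        have h := geom_sum_mul x k
        rw [hxk, sub_self] at h
        rcases mul_eq_zero.mp h with h' | h'
        · exact h'
        · exact absurd (sub_eq_zero.mp h') hx1
      calc ∑ i : Fin k, x ^ ((i : ℕ) + 1)
          = ∑ i ∈ Finset.range k, x ^ (i + 1) := Fin.sum_univ_eq_sum_range (fun i => x ^ (i + 1)) k
        _ = ∑ i ∈ Finset.range k, x * x ^ i := by
            refine Finset.sum_congr rfl fun i _ => ?_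
            rw [pow_succ]; ring
        _ = x * ∑ i ∈ Finset.range k, x ^ i := by rw [Finset.mul_sum]
        _ = 0 := by rw [hsum, mul_zero]
  -- full β power sum
  have L2 : ∀ e : ℕ, ∑ j : Fin 3 × Fin k, β j ^ e
      = (1 + (γ : F) ^ e + (γ : F) ^ (2 * e)) * (if k ∣ e then (k : F) else 0) := by
    intro e
    rw [← L1 e, Fintype.sum_prod_type]
    have hrow : ∀ t : Fin 3, ∑ i : Fin k, β (t, i) ^ e
        = (γ : F) ^ ((t : ℕ) * e) * ∑ i : Fin k, α i ^ e := by
      intro t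
      rw [Finset.mul_sum]
      refine Finset.sum_congr rfl fun i _ => ?_
      rw [hβ (t, i), mul_pow, pow_mul]
    rw [Finset.sum_congr rfl (fun t _ => hrow t), Fin.sum_univ_three]
    norm_num
    ring
  -- evaluation of vandermonde part
  have hP1 : ∀ r s : Fin k, ∑ j : Fin 3 × Fin k, β j ^ (r : ℕ) * β j ^ (s : ℕ)
      = (if (r : ℕ) + (s : ℕ) = 0 then (3 : F) * (k : F)
        else if (r : ℕ) + (s : ℕ) = k then (k : F) * (1 + (γ : F) ^ k + (γ : F) ^ (2 * k))
        else 0) := by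
    intro r s
    rw [Finset.sum_congr rfl (fun j _ => (pow_add (β j) (r : ℕ) (s : ℕ)).symm), L2]
    by_cases h0 : (r : ℕ) + (s : ℕ) = 0
    · rw [if_pos h0, h0]
      rw [if_pos (dvd_zero k)]
      norm_num
    · rw [if_neg h0]
      by_cases hkc : (r : ℕ) + (s : ℕ) = k
      · rw [if_pos hkc, hkc, if_pos dvd_rfl]
        ring
      · rw [if_neg hkc]
        have hnd : ¬ k ∣ (r : ℕ) + (s : ℕ) := by
          intro hdvd
          obtain ⟨t, ht⟩ := hdvd
          have hb1 : (r : ℕ) < k := r.isLt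
          have hb2 : (s : ℕ) < k := s.isLt
          rcases Nat.lt_or_ge t 2 with h | h
          · interval_cases t <;> omega
          · have := Nat.mul_le_mul_left k h
            omega
        rw [if_neg hnd, mul_zero]
  -- matrix entry lemmas
  have hG_inr_lt : ∀ (r : Fin k) (j' : Fin ℓ), (r : ℕ) < k - ℓ →
      GRLmatrix k ℓ hℓk β A r (Sum.inr j') = 0 := by
    intro r j' h
    simp [GRLmatrix, h]
  have hG_inr_eq : ∀ (r : Fin k) (j' : Fin ℓ) (a : Fin ℓ), ¬ ((r : ℕ) < k - ℓ) →
      (r : ℕ) - (k - ℓ) = (a : ℕ) → GRLmatrix k ℓ hℓk β A r (Sum.inr j') = A a j' := by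
    intro r j' a h ha
    simp only [GRLmatrix, Sum.elim_inr, dif_neg h]
    congr 1
    exact Fin.ext ha
  -- main argument
  rw [eq_bot_iff]
  intro v hv
  rw [Submodule.mem_inf] at hv
  obtain ⟨hv1, hv2⟩ := hv
  rw [Submodule.mem_bot]
  have hv1' : v ∈ Submodule.span F (Set.range (GRLmatrix k ℓ hℓk β A)) := hv1
  obtain ⟨x, hx⟩ := (Submodule.mem_span_range_iff_exists_fun F).mp hv1'
  have hdual : ∀ s : Fin k, ∑ i, v i * (GRLmatrix k ℓ hℓk β A) s i = 0 := fun s =>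
    hv2 (GRLmatrix k ℓ hℓk β A s) (Submodule.subset_span ⟨s, rfl⟩)
  have hMx : ∀ s : Fin k,
      ∑ r : Fin k, x r * ∑ i, GRLmatrix k ℓ hℓk β A r i * GRLmatrix k ℓ hℓk β A s i = 0 := by
    intro s
    have h0 := hdual s
    rw [← hx] at h0
    calc ∑ r : Fin k, x r * ∑ i, GRLmatrix k ℓ hℓk β A r i * GRLmatrix k ℓ hℓk β A s i
        = ∑ r : Fin k, ∑ i, x r * GRLmatrix k ℓ hℓk β A r i * GRLmatrix k ℓ hℓk β A s i := by
          refine Finset.sum_congr rfl fun r _ => ?_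
          rw [Finset.mul_sum]
          exact Finset.sum_congr rfl fun i _ => (mul_assoc _ _ _).symm
      _ = ∑ i, ∑ r : Fin k, x r * GRLmatrix k ℓ hℓk β A r i * GRLmatrix k ℓ hℓk β A s i :=
          Finset.sum_comm
      _ = ∑ i, (∑ r : Fin k, x r • GRLmatrix k ℓ hℓk β A r) i * GRLmatrix k ℓ hℓk β A s i := by
          refine Finset.sum_congr rfl fun i _ => ?_
          rw [Finset.sum_apply]
          simp only [Pi.smul_apply, smul_eq_mul]
          rw [← Finset.sum_mul]
      _ = 0 := h0
  have hM : ∀ r s : Fin k, ∑ i, GRLmatrix k ℓ hℓk β A r i * GRLmatrix k ℓ hℓk β A s i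
      = (if (r : ℕ) + (s : ℕ) = 0 then (3 : F) * (k : F)
        else if (r : ℕ) + (s : ℕ) = k then (k : F) * (1 + (γ : F) ^ k + (γ : F) ^ (2 * k))
        else 0)
        + ∑ j' : Fin ℓ, GRLmatrix k ℓ hℓk β A r (Sum.inr j')
            * GRLmatrix k ℓ hℓk β A s (Sum.inr j') := by
    intro r s
    rw [Fintype.sum_sum_type]
    congr 1
    rw [← hP1 r s]
    rfl
  have hEq : ∀ s : Fin k,
      (∑ r : Fin k, x r * (if (r : ℕ) + (s : ℕ) = 0 then (3 : F) * (k : F)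
        else if (r : ℕ) + (s : ℕ) = k then (k : F) * (1 + (γ : F) ^ k + (γ : F) ^ (2 * k))
        else 0))
      + (∑ r : Fin k, x r * ∑ j' : Fin ℓ, GRLmatrix k ℓ hℓk β A r (Sum.inr j')
          * GRLmatrix k ℓ hℓk β A s (Sum.inr j')) = 0 := by
    intro s
    have h := hMx s
    calc (∑ r : Fin k, x r * (if (r : ℕ) + (s : ℕ) = 0 then (3 : F) * (k : F)
        else if (r : ℕ) + (s : ℕ) = k then (k : F) * (1 + (γ : F) ^ k + (γ : F) ^ (2 * k))
        else 0))
      + (∑ r : Fin k, x r * ∑ j' : Fin ℓ, GRLmatrix k ℓ hℓk β A r (Sum.inr j')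
          * GRLmatrix k ℓ hℓk β A s (Sum.inr j'))
        = ∑ r : Fin k, x r * ∑ i, GRLmatrix k ℓ hℓk β A r i * GRLmatrix k ℓ hℓk β A s i := by
          rw [← Finset.sum_add_distrib]
          exact Finset.sum_congr rfl fun r _ => by rw [hM r s]; exact (mul_add _ _ _).symm
      _ = 0 := h
  have hsingle : ∀ s r₀ : Fin k, ((r₀ : ℕ) + (s : ℕ) = 0 ∨ (r₀ : ℕ) + (s : ℕ) = k) →
      (∑ r : Fin k, x r * (if (r : ℕ) + (s : ℕ) = 0 then (3 : F) * (k : F)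
        else if (r : ℕ) + (s : ℕ) = k then (k : F) * (1 + (γ : F) ^ k + (γ : F) ^ (2 * k))
        else 0))
      = x r₀ * (if (r₀ : ℕ) + (s : ℕ) = 0 then (3 : F) * (k : F)
        else if (r₀ : ℕ) + (s : ℕ) = k then (k : F) * (1 + (γ : F) ^ k + (γ : F) ^ (2 * k))
        else 0) := by
    intro s r₀ h
    refine Finset.sum_eq_single_of_mem r₀ (Finset.mem_univ _) (fun r _ hr => ?_)
    have hrne : (r : ℕ) ≠ (r₀ : ℕ) := fun hh => hr (Fin.ext hh)
    have hb1 : (r : ℕ) < k := r.isLt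
    have hb2 : (r₀ : ℕ) < k := r₀.isLt
    rw [if_neg (by omega), if_neg (by omega), mul_zero]
  have hWzero : ∀ s : Fin k, (s : ℕ) < k - ℓ →
      (∑ r : Fin k, x r * ∑ j' : Fin ℓ, GRLmatrix k ℓ hℓk β A r (Sum.inr j')
        * GRLmatrix k ℓ hℓk β A s (Sum.inr j')) = 0 := by
    intro s hs
    refine Finset.sum_eq_zero fun r _ => ?_
    rw [Finset.sum_eq_zero fun j' _ => by rw [hG_inr_lt s j' hs, mul_zero], mul_zero]
  -- x 0 = 0
  have hx0 : x ⟨0, hk0⟩ = 0 := by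
    have h := hEq ⟨0, hk0⟩
    rw [hsingle ⟨0, hk0⟩ ⟨0, hk0⟩ (Or.inl rfl), hWzero ⟨0, hk0⟩ (by show (0:ℕ) < k - ℓ; omega),
      add_zero, if_pos (show ((⟨0, hk0⟩ : Fin k) : ℕ) + ((⟨0, hk0⟩ : Fin k) : ℕ) = 0 from rfl)] at h
    rcases mul_eq_zero.mp h with h' | h'
    · exact h'
    · exact absurd h' h3kF
  -- x t = 0 for t > ℓ
  have hxhigh : ∀ t : Fin k, ℓ < (t : ℕ) → x t = 0 := by
    intro t ht
    have hb : (t : ℕ) < k := t.isLt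
    have h := hEq ⟨k - (t : ℕ), by omega⟩
    have hsv : ((⟨k - (t : ℕ), by omega⟩ : Fin k) : ℕ) = k - (t : ℕ) := rfl
    rw [hsingle _ t (Or.inr (by show (t:ℕ) + (k - (t:ℕ)) = k; omega)),
      hWzero _ (by show k - (t:ℕ) < k - ℓ; omega), add_zero,
      if_neg (by show ¬ ((t:ℕ) + (k - (t:ℕ)) = 0); omega),
      if_pos (by show (t:ℕ) + (k - (t:ℕ)) = k; omega)] at h
    rcases mul_eq_zero.mp h with h' | h'
    · exact h'
    · exact absurd h' hcne
  -- x ℓ = 0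
  have hxl : x ⟨ℓ, hlk'⟩ = 0 := by
    have h := hEq ⟨k - ℓ, by omega⟩
    have hsv : ((⟨k - ℓ, by omega⟩ : Fin k) : ℕ) = k - ℓ := rfl
    have hrv : ((⟨ℓ, hlk'⟩ : Fin k) : ℕ) = ℓ := rfl
    rw [hsingle _ ⟨ℓ, hlk'⟩ (Or.inr (by show ℓ + (k - ℓ) = k; omega)),
      if_neg (by show ¬ (ℓ + (k - ℓ) = 0); omega),
      if_pos (by show ℓ + (k - ℓ) = k; omega)] at h
    rcases hcase with hlt | ⟨heq, hne⟩
    · have hW : (∑ r : Fin k, x r * ∑ j' : Fin ℓ,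
          GRLmatrix k ℓ hℓk β A r (Sum.inr j')
          * GRLmatrix k ℓ hℓk β A ⟨k - ℓ, by omega⟩ (Sum.inr j')) = 0 := by
        refine Finset.sum_eq_zero fun r _ => ?_
        by_cases hrlt : (r : ℕ) < k - ℓ
        · rw [Finset.sum_eq_zero fun j' _ => by rw [hG_inr_lt r j' hrlt, zero_mul], mul_zero]
        · rw [hxhigh r (by omega), zero_mul]
      rw [hW, add_zero] at h
      rcases mul_eq_zero.mp h with h' | h'
      · exact h'
      · exact absurd h' hcne
    · have hW : (∑ r : Fin k, x r * ∑ j' : Fin ℓ,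
          GRLmatrix k ℓ hℓk β A r (Sum.inr j')
          * GRLmatrix k ℓ hℓk β A ⟨k - ℓ, by omega⟩ (Sum.inr j'))
          = x ⟨ℓ, hlk'⟩ * ∑ i : Fin ℓ, A ⟨0, by omega⟩ i ^ 2 := by
        have hz : ∀ r ∈ (Finset.univ : Finset (Fin k)), r ≠ ⟨ℓ, hlk'⟩ →
            x r * (∑ j' : Fin ℓ, GRLmatrix k ℓ hℓk β A r (Sum.inr j')
              * GRLmatrix k ℓ hℓk β A ⟨k - ℓ, by omega⟩ (Sum.inr j')) = 0 := by
          intro r _ hr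
          by_cases hrlt : (r : ℕ) < k - ℓ
          · rw [Finset.sum_eq_zero fun j' _ => by rw [hG_inr_lt r j' hrlt, zero_mul],
              mul_zero]
          · have hrne : (r : ℕ) ≠ ℓ := fun hh => hr (Fin.ext hh)
            rw [hxhigh r (by omega), zero_mul]
        rw [Finset.sum_eq_single_of_mem ⟨ℓ, hlk'⟩ (Finset.mem_univ _) hz]
        congr 1
        refine Finset.sum_congr rfl fun j' _ => ?_
        rw [hG_inr_eq ⟨ℓ, hlk'⟩ j' ⟨0, by omega⟩ (by show ¬ (ℓ < k - ℓ); omega)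
            (by show ℓ - (k - ℓ) = 0; omega),
          hG_inr_eq ⟨k - ℓ, by omega⟩ j' ⟨0, by omega⟩ (by show ¬ (k - ℓ < k - ℓ); omega)
            (by show (k - ℓ) - (k - ℓ) = 0; omega), sq]
      rw [hW, ← mul_add] at h
      rcases mul_eq_zero.mp h with h' | h'
      · exact h'
      · exact absurd h' hne
  have hxge : ∀ r : Fin k, ℓ ≤ (r : ℕ) → x r = 0 := by
    intro r hr
    rcases eq_or_lt_of_le hr with h | h
    · have : r = ⟨ℓ, hlk'⟩ := Fin.ext h.symm
      rw [this]; exact hxl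
    · exact hxhigh r h
  -- x t = 0 for 0 < t < ℓ
  have hxlow : ∀ t : Fin k, 0 < (t : ℕ) → (t : ℕ) < ℓ → x t = 0 := by
    intro t h1 h2
    have h := hEq ⟨k - (t : ℕ), by omega⟩
    have hsv : ((⟨k - (t : ℕ), by omega⟩ : Fin k) : ℕ) = k - (t : ℕ) := rfl
    have hW : (∑ r : Fin k, x r * ∑ j' : Fin ℓ,
        GRLmatrix k ℓ hℓk β A r (Sum.inr j')
        * GRLmatrix k ℓ hℓk β A ⟨k - (t : ℕ), by omega⟩ (Sum.inr j')) = 0 := by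
      refine Finset.sum_eq_zero fun r _ => ?_
      by_cases hrlt : (r : ℕ) < k - ℓ
      · rw [Finset.sum_eq_zero fun j' _ => by rw [hG_inr_lt r j' hrlt, zero_mul], mul_zero]
      · rw [hxge r (by omega), zero_mul]
    rw [hsingle _ t (Or.inr (by show (t:ℕ) + (k - (t:ℕ)) = k; omega)), hW, add_zero,
      if_neg (by show ¬ ((t:ℕ) + (k - (t:ℕ)) = 0); omega),
      if_pos (by show (t:ℕ) + (k - (t:ℕ)) = k; omega)] at h
    rcases mul_eq_zero.mp h with h' | h'
    · exact h'
    · exact absurd h' hcne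
  have hxall : ∀ r : Fin k, x r = 0 := by
    intro r
    rcases Nat.eq_zero_or_pos (r : ℕ) with h | h
    · have : r = ⟨0, hk0⟩ := Fin.ext h
      rw [this]; exact hx0
    · by_cases h2 : (r : ℕ) < ℓ
      · exact hxlow r h h2
      · exact hxge r (le_of_not_gt h2)
  rw [← hx]
  exact Finset.sum_eq_zero fun r _ => by rw [hxall r, zero_smul]
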